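/- arXiv:2007.09736 — 5 statements merged into one kernel-verified Lean document; each statement's English description precedes it below -/
import Mathlib

section
/- The 4-cube graph Q₄ admits a 1-factorization 𝓕 into four perfect matchings such that every 4-cycle of Q₄ is rainbow, i.e., each of the four edges of every 4-cycle lies in a different one of the four perfect matchings (so the four edges are in bijective correspondence with the four 1-factors). -/
/-- The 4-cube graph on vertex set `Fin 4 → ZMod 2`: two vertices are adjacent
iff they differ in exactly one coordinate. -/
def Q4 : SimpleGraph (Fin 4 → ZMod 2) where
  Adj x y := (Finset.univ.filter fun i => x i ≠ y i).card = 1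
  symm := by
    constructor
    intro x y h
    simpa [ne_comm] using h
  loopless := by constructor; intro x; simp

variable {V : Type*}

/-- `M` is (the edge set of) a perfect matching of `G`. -/
def IsPM (G : SimpleGraph V) (M : Set (Sym2 V)) : Prop :=
  M ⊆ G.edgeSet ∧ ∀ v : V, ∃! e, e ∈ M ∧ v ∈ e

/-- `F` is a 1-factorization of `G` into four perfect matchings:
each `F i` is a perfect matching and every edge of `G` lies in exactly one `F i`. -/
def IsOneFactorization (G : SimpleGraph V) (F : Fin 4 → Set (Sym2 V)) : Prop :=
  (∀ i, IsPM G (F i)) ∧ ∀ e ∈ G.edgeSet, ∃! i, e ∈ F i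

/-- `a, b, c, d` are the successive vertices of a 4-cycle of `G`. -/
def IsC4 (G : SimpleGraph V) (a b c d : V) : Prop :=
  a ≠ b ∧ a ≠ c ∧ a ≠ d ∧ b ≠ c ∧ b ≠ d ∧ c ≠ d ∧
  G.Adj a b ∧ G.Adj b c ∧ G.Adj c d ∧ G.Adj d a

instance : DecidableRel Q4.Adj :=
  fun x y => inferInstanceAs (Decidable ((Finset.univ.filter fun i => x i ≠ y i).card = 1))

/-- The `i`-th standard basis vector. -/
def δ (i : Fin 4) : Fin 4 → ZMod 2 := fun k => if k = i then 1 else 0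

def kv : Fin 4 → ZMod 2 × ZMod 2 := ![(0,0),(0,1),(1,1),(1,0)]
def km : Fin 4 → Fin 4 → ZMod 2 × ZMod 2 :=
  ![![(0,0),(1,0),(0,1),(1,1)], ![(1,0),(0,0),(1,1),(0,1)],
    ![(0,1),(1,1),(0,0),(1,0)], ![(1,1),(0,1),(1,0),(0,0)]]

def enc : ZMod 2 × ZMod 2 → Fin 4 :=
  fun p => ⟨2 * p.1.val + p.2.val, by
    have h1 := ZMod.val_lt p.1; have h2 := ZMod.val_lt p.2; omega⟩

/-- Color of the pair `(x, y)`: for an edge `{x, x + δ i}` this equals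
`enc (kv i + ∑ k, x k • km i k)`. -/
def pc (x y : Fin 4 → ZMod 2) : Fin 4 :=
  enc ((∑ i, (x i + y i) • kv i) + ∑ i, ∑ k, ((x i + y i) * x k) • km i k)

theorem L1 : ∀ x y : Fin 4 → ZMod 2, Q4.Adj x y ↔ ∃ i, y = x + δ i := by decide
theorem L2 : ∀ (x : Fin 4 → ZMod 2) (i : Fin 4), x + δ i + δ i = x := by decide
theorem L3 : ∀ (x : Fin 4 → ZMod 2) (i j : Fin 4), x + δ i + δ j + δ i = x + δ j := by decide
theorem L4 : ∀ (x : Fin 4 → ZMod 2) (i j k l : Fin 4), i ≠ j →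
    x + δ i + δ j + δ k + δ l = x → (k = i ∧ l = j) ∨ (k = j ∧ l = i) := by decide
theorem L5 : ∀ (x y z : Fin 4 → ZMod 2), Q4.Adj x y → Q4.Adj x z → pc x y = pc x z → y = z := by
  decide
theorem L6 : ∀ (x : Fin 4 → ZMod 2) (c : Fin 4), ∃ y, Q4.Adj x y ∧ pc x y = c := by decide
theorem L7 : ∀ x y : Fin 4 → ZMod 2, pc x y = pc y x := by decide
theorem L8 : ∀ (a : Fin 4 → ZMod 2) (i j : Fin 4), i ≠ j →
    pc a (a + δ i) ≠ pc (a + δ i) (a + δ i + δ j) ∧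
    pc a (a + δ i) ≠ pc (a + δ i + δ j) (a + δ j) ∧
    pc a (a + δ i) ≠ pc (a + δ j) a ∧
    pc (a + δ i) (a + δ i + δ j) ≠ pc (a + δ i + δ j) (a + δ j) ∧
    pc (a + δ i) (a + δ i + δ j) ≠ pc (a + δ j) a ∧
    pc (a + δ i + δ j) (a + δ j) ≠ pc (a + δ j) a := by decide

/-- The coloring on unordered pairs: `some color` for edges, `none` otherwise. -/
def colP : Sym2 (Fin 4 → ZMod 2) → Option (Fin 4) :=
  Sym2.lift ⟨fun x y => if Q4.Adj x y then some (pc x y) else none, by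
    intro x y
    dsimp only
    by_cases h : Q4.Adj x y
    · rw [if_pos h, if_pos h.symm, L7]
    · rw [if_neg h, if_neg (fun h' => h h'.symm)]⟩

theorem L9 : ∀ c0 c1 c2 c3 : Fin 4, c0 ≠ c1 → c0 ≠ c2 → c0 ≠ c3 → c1 ≠ c2 → c1 ≠ c3 →
    c2 ≠ c3 → Function.Bijective ![c0, c1, c2, c3] := by decide
theorem L10 : ∀ c0 c1 c2 c3 : Fin 4, ![c0, c1, c2, c3] 0 = c0 ∧ ![c0, c1, c2, c3] 1 = c1 ∧
    ![c0, c1, c2, c3] 2 = c2 ∧ ![c0, c1, c2, c3] 3 = c3 := by decide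

theorem colP_mk (x y : Fin 4 → ZMod 2) :
    colP s(x, y) = if Q4.Adj x y then some (pc x y) else none := rfl

/-- The factorization. -/
def Fac : Fin 4 → Set (Sym2 (Fin 4 → ZMod 2)) := fun i => {e | colP e = some i}

theorem mem_Fac (i : Fin 4) (e : Sym2 (Fin 4 → ZMod 2)) :
    e ∈ Fac i ↔ colP e = some i := Iff.rfl

theorem mem_Fac_mk {x y : Fin 4 → ZMod 2} (h : Q4.Adj x y) (i : Fin 4) :
    s(x, y) ∈ Fac i ↔ pc x y = i := by
  rw [mem_Fac, colP_mk, if_pos h]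
  exact ⟨fun h' => Option.some_injective _ h', fun h' => by rw [h']⟩

theorem stmt0 : ∃ F : Fin 4 → Set (Sym2 (Fin 4 → ZMod 2)),
    IsOneFactorization Q4 F ∧
    ∀ a b c d : Fin 4 → ZMod 2, IsC4 Q4 a b c d →
      ∃ g : Fin 4 → Fin 4, Function.Bijective g ∧
        s(a, b) ∈ F (g 0) ∧ s(b, c) ∈ F (g 1) ∧ s(c, d) ∈ F (g 2) ∧ s(d, a) ∈ F (g 3) := by
  refine ⟨Fac, ⟨?_, ?_⟩, ?_⟩
  · -- each `Fac i` is a perfect matching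
    intro i
    constructor
    · -- subset of edge set
      intro e he
      induction e using Sym2.ind with
      | _ x y =>
        rw [mem_Fac, colP_mk] at he
        rw [SimpleGraph.mem_edgeSet]
        by_cases h : Q4.Adj x y
        · exact h
        · rw [if_neg h] at he; exact absurd he (by simp)
    · -- every vertex covered exactly once
      intro v
      obtain ⟨w, hw, hpc⟩ := L6 v i
      refine ⟨s(v, w), ⟨(mem_Fac_mk hw i).mpr hpc, Sym2.mem_mk_left v w⟩, ?_⟩
      rintro e ⟨he, hv⟩
      induction e using Sym2.ind with
      | _ x y =>
        have hxy : Q4.Adj x y := by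
          rw [mem_Fac, colP_mk] at he
          by_cases h : Q4.Adj x y
          · exact h
          · rw [if_neg h] at he; exact absurd he (by simp)
        have hpcxy : pc x y = i := (mem_Fac_mk hxy i).mp he
        rcases Sym2.mem_iff.mp hv with rfl | rfl
        · -- v = x
          have : y = w := L5 v y w hxy hw (by rw [hpcxy, hpc])
          rw [this]
        · -- v = y
          have hvx : Q4.Adj v x := hxy.symm
          have : x = w := L5 v x w hvx hw (by rw [← L7, hpcxy, hpc])
          rw [Sym2.eq_swap, this]
  · -- every edge in exactly one factor
    intro e he
    induction e using Sym2.ind with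
    | _ x y =>
      rw [SimpleGraph.mem_edgeSet] at he
      refine ⟨pc x y, (mem_Fac_mk he _).mpr rfl, fun j hj => ((mem_Fac_mk he j).mp hj).symm⟩
  · -- every 4-cycle is rainbow
    rintro a b c d ⟨hab, hac, had, hbc, hbd, hcd, hAB, hBC, hCD, hDA⟩
    obtain ⟨i, rfl⟩ := (L1 a b).mp hAB
    obtain ⟨j, rfl⟩ := (L1 _ _).mp hBC
    obtain ⟨k, hk⟩ := (L1 _ _).mp hCD
    obtain ⟨l, hl⟩ := (L1 _ _).mp hDA
    have hij : i ≠ j := by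
      rintro rfl
      exact hac (L2 a i).symm
    rw [hk] at hl
    rcases L4 a i j k l hij hl.symm with ⟨hki, hlj⟩ | ⟨hkj, -⟩
    · -- the good case: d = a + δ j
      rw [hki] at hk
      have hd : d = a + δ j := hk.trans (L3 a i j)
      subst hd
      obtain ⟨h1, h2, h3, h4, h5, h6⟩ := L8 a i j hij
      obtain ⟨e0, e1, e2, e3⟩ := L10 (pc a (a + δ i)) (pc (a + δ i) (a + δ i + δ j))
        (pc (a + δ i + δ j) (a + δ j)) (pc (a + δ j) a)
      refine ⟨![pc a (a + δ i), pc (a + δ i) (a + δ i + δ j),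
                pc (a + δ i + δ j) (a + δ j), pc (a + δ j) a], ?_, ?_, ?_, ?_, ?_⟩
      · exact L9 _ _ _ _ h1 h2 h3 h4 h5 h6
      · exact (mem_Fac_mk hAB _).mpr e0.symm
      · exact (mem_Fac_mk hBC _).mpr e1.symm
      · exact (mem_Fac_mk hCD _).mpr e2.symm
      · exact (mem_Fac_mk hDA _).mpr e3.symm
    · -- degenerate case: d = b, contradiction
      rw [hkj] at hk
      exact absurd (hk.trans (L2 (a + δ i) j)) (fun h => hbd h.symm)
end

section
/- There exists a 1-factorization 𝓕 of the 4-cube graph Q₄ that is rainbow on every 4-cycle and such that for any two distinct 1-factors of 𝓕, their union is a spanning 2-regular subgraph of Q₄ that is the disjoint union of two 8-cycles, and moreover along each of these 8-cycles any two vertices at distance 4 apart on the cycle are antipodal in Q₄ (i.e., they differ in all four coordinates). -/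
variable {V : Type*}

/-- The antipode vector `(1,1,1,1)` of the 4-cube. -/
def antip : Fin 4 → ZMod 2 := fun _ => 1


set_option maxRecDepth 4000000
set_option maxHeartbeats 1600000
set_option synthInstance.maxSize 4000
set_option synthInstance.maxHeartbeats 1600000

abbrev Vx := Fin 4 → ZMod 2

instance inst_s3 : DecidableRel Q4.Adj :=
  fun x y => inferInstanceAs (Decidable ((Finset.univ.filter fun i => x i ≠ y i).card = 1))

def uv (k : Fin 4) : Vx := fun i => if i = k then 1 else 0
def xr : Fin 4 → Fin 4 → Fin 4 := ![![0,1,2,3],![1,0,3,2],![2,3,0,1],![3,2,1,0]]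
def mw : Fin 4 → Fin 4 := ![0,2,3,1]
def mw1 : Fin 4 → Fin 4 := ![0,3,1,2]
def qf (x : Vx) : Fin 4 := (if x 1 + x 3 = 1 then 1 else 0) + (if x 2 + x 3 = 1 then 2 else 0)
def colfun (x : Vx) (k : Fin 4) : Fin 4 :=
  xr (if x 0 + x 1 + x 2 + x 3 = 0 then mw k else mw1 k) (qf x)
def dirfun (i : Fin 4) (v : Vx) : Fin 4 :=
  if v 0 + v 1 + v 2 + v 3 = 0 then mw1 (xr i (qf v)) else mw (xr i (qf v))

def Fs0 : Finset (Sym2 Vx) := {s(![0,0,0,0],![1,0,0,0]), s(![0,0,0,1],![0,1,0,1]), s(![0,0,1,0],![0,0,1,1]), s(![0,1,0,0],![0,1,1,0]), s(![0,1,1,1],![1,1,1,1]), s(![1,0,0,1],![1,0,1,1]), s(![1,0,1,0],![1,1,1,0]), s(![1,1,0,0],![1,1,0,1])}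
def Fs1 : Finset (Sym2 Vx) := {s(![0,0,0,0],![0,0,0,1]), s(![0,0,1,0],![0,1,1,0]), s(![0,0,1,1],![1,0,1,1]), s(![0,1,0,0],![1,1,0,0]), s(![0,1,0,1],![0,1,1,1]), s(![1,0,0,0],![1,0,1,0]), s(![1,0,0,1],![1,1,0,1]), s(![1,1,1,0],![1,1,1,1])}
def Fs2 : Finset (Sym2 Vx) := {s(![0,0,0,0],![0,1,0,0]), s(![0,0,0,1],![0,0,1,1]), s(![0,0,1,0],![1,0,1,0]), s(![0,1,0,1],![1,1,0,1]), s(![0,1,1,0],![0,1,1,1]), s(![1,0,0,0],![1,0,0,1]), s(![1,0,1,1],![1,1,1,1]), s(![1,1,0,0],![1,1,1,0])}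
def Fs3 : Finset (Sym2 Vx) := {s(![0,0,0,0],![0,0,1,0]), s(![0,0,0,1],![1,0,0,1]), s(![0,0,1,1],![0,1,1,1]), s(![0,1,0,0],![0,1,0,1]), s(![0,1,1,0],![1,1,1,0]), s(![1,0,0,0],![1,1,0,0]), s(![1,0,1,0],![1,0,1,1]), s(![1,1,0,1],![1,1,1,1])}
def Fs : Fin 4 → Finset (Sym2 Vx) := ![Fs0, Fs1, Fs2, Fs3]
def v01 : ZMod 8 → Vx := ![![0,0,0,0],![0,0,0,1],![0,1,0,1],![0,1,1,1],![1,1,1,1],![1,1,1,0],![1,0,1,0],![1,0,0,0]]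
def w01 : ZMod 8 → Vx := ![![0,0,1,0],![0,1,1,0],![0,1,0,0],![1,1,0,0],![1,1,0,1],![1,0,0,1],![1,0,1,1],![0,0,1,1]]
def v02 : ZMod 8 → Vx := ![![0,0,0,0],![1,0,0,0],![1,0,0,1],![1,0,1,1],![1,1,1,1],![0,1,1,1],![0,1,1,0],![0,1,0,0]]
def w02 : ZMod 8 → Vx := ![![0,0,0,1],![0,1,0,1],![1,1,0,1],![1,1,0,0],![1,1,1,0],![1,0,1,0],![0,0,1,0],![0,0,1,1]]
def v03 : ZMod 8 → Vx := ![![0,0,0,0],![1,0,0,0],![1,1,0,0],![1,1,0,1],![1,1,1,1],![0,1,1,1],![0,0,1,1],![0,0,1,0]]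
def w03 : ZMod 8 → Vx := ![![0,0,0,1],![0,1,0,1],![0,1,0,0],![0,1,1,0],![1,1,1,0],![1,0,1,0],![1,0,1,1],![1,0,0,1]]
def v12 : ZMod 8 → Vx := ![![0,0,0,0],![0,0,0,1],![0,0,1,1],![1,0,1,1],![1,1,1,1],![1,1,1,0],![1,1,0,0],![0,1,0,0]]
def w12 : ZMod 8 → Vx := ![![0,0,1,0],![0,1,1,0],![0,1,1,1],![0,1,0,1],![1,1,0,1],![1,0,0,1],![1,0,0,0],![1,0,1,0]]
def v13 : ZMod 8 → Vx := ![![0,0,0,0],![0,0,0,1],![1,0,0,1],![1,1,0,1],![1,1,1,1],![1,1,1,0],![0,1,1,0],![0,0,1,0]]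
def w13 : ZMod 8 → Vx := ![![0,0,1,1],![0,1,1,1],![0,1,0,1],![0,1,0,0],![1,1,0,0],![1,0,0,0],![1,0,1,0],![1,0,1,1]]
def v23 : ZMod 8 → Vx := ![![0,0,0,0],![0,0,1,0],![1,0,1,0],![1,0,1,1],![1,1,1,1],![1,1,0,1],![0,1,0,1],![0,1,0,0]]
def w23 : ZMod 8 → Vx := ![![0,0,0,1],![0,0,1,1],![0,1,1,1],![0,1,1,0],![1,1,1,0],![1,1,0,0],![1,0,0,0],![1,0,0,1]]


def Ff : Fin 4 → Set (Sym2 Vx) := fun i => ↑(Fs i)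

theorem mem_Fs : ∀ (x : Vx) (k : Fin 4), s(x, x + uv k) ∈ Fs (colfun x k) := by decide
theorem dir_col : ∀ (x : Vx) (k : Fin 4), dirfun (colfun x k) x = k := by decide
theorem col_dir : ∀ (i : Fin 4) (v : Vx), colfun v (dirfun i v) = i := by decide
theorem col_consist : ∀ (x : Vx) (k : Fin 4), colfun (x + uv k) k = colfun x k := by decide
theorem addu : ∀ (x : Vx) (k : Fin 4), x + uv k + uv k = x := by decide
theorem adj_iff : ∀ a b : Vx, Q4.Adj a b ↔ ∃ k, b = a + uv k := by decide
theorem Fs_sub : ∀ i : Fin 4, ∀ e ∈ Fs i, e ∈ Q4.edgeSet := by decide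
set_option maxHeartbeats 1600000 in
theorem Fs_form : ∀ i : Fin 4, Fs i ⊆
    (Finset.univ.filter fun p : Vx × Fin 4 => colfun p.1 p.2 = i).image
      (fun p => s(p.1, p.1 + uv p.2)) := by decide
theorem Fs_unique : ∀ (x : Vx) (k j : Fin 4), s(x, x + uv k) ∈ Fs j → j = colfun x k := by decide
set_option maxHeartbeats 1600000 in
theorem rainbow_aux : ∀ (x : Vx) (k l : Fin 4), k ≠ l →
    Function.Bijective ![colfun x k, colfun (x + uv k) l, colfun (x + uv l) k, colfun x l] ∧
    s(x, x + uv k) ∈ Fs (colfun x k) ∧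
    s(x + uv k, x + uv k + uv l) ∈ Fs (colfun (x + uv k) l) ∧
    s(x + uv k + uv l, x + uv l) ∈ Fs (colfun (x + uv l) k) ∧
    s(x + uv l, x) ∈ Fs (colfun x l) := by decide
set_option maxHeartbeats 1600000 in
theorem final_case : ∀ (a : Vx) (k m l : Fin 4), Q4.Adj (a + uv k + uv m) (a + uv l) →
    a ≠ a + uv k + uv m → a + uv k ≠ a + uv l → (m = l ∧ k ≠ l) := by decide

theorem c4_form : ∀ a b c d : Vx, IsC4 Q4 a b c d →
    ∃ k l, k ≠ l ∧ b = a + uv k ∧ c = a + uv k + uv l ∧ d = a + uv l := by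
  intro a b c d h
  obtain ⟨hab, hac, had, hbc, hbd, hcd, h1, h2, h3, h4⟩ := h
  obtain ⟨k, rfl⟩ := (adj_iff a b).mp h1
  obtain ⟨m, rfl⟩ := (adj_iff _ c).mp h2
  obtain ⟨l, hl⟩ := (adj_iff d a).mp h4
  have hd : d = a + uv l := by rw [hl, addu]
  subst hd
  obtain ⟨hm, hkl⟩ := final_case a k m l h3 hac hbd
  exact ⟨k, l, hkl, rfl, by rw [hm], rfl⟩

set_option maxHeartbeats 1600000 in
theorem pair01 :
    Function.Bijective (Sum.elim v01 w01 : ZMod 8 ⊕ ZMod 8 → Vx) ∧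
    (∀ k : ZMod 8, s(v01 k, v01 (k+1)) ∈ Fs 0 ∨ s(v01 k, v01 (k+1)) ∈ Fs 1) ∧
    (∀ k : ZMod 8, s(w01 k, w01 (k+1)) ∈ Fs 0 ∨ s(w01 k, w01 (k+1)) ∈ Fs 1) ∧
    (∀ e ∈ Fs 0, (∃ k : ZMod 8, e = s(v01 k, v01 (k+1))) ∨ ∃ k : ZMod 8, e = s(w01 k, w01 (k+1))) ∧
    (∀ e ∈ Fs 1, (∃ k : ZMod 8, e = s(v01 k, v01 (k+1))) ∨ ∃ k : ZMod 8, e = s(w01 k, w01 (k+1))) ∧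
    (∀ k : ZMod 8, v01 (k+4) = v01 k + antip) ∧
    (∀ k : ZMod 8, w01 (k+4) = w01 k + antip) := by
  refine ⟨by decide, by decide, by decide, by decide, by decide, by decide, by decide⟩

set_option maxHeartbeats 1600000 in
theorem pair02 :
    Function.Bijective (Sum.elim v02 w02 : ZMod 8 ⊕ ZMod 8 → Vx) ∧
    (∀ k : ZMod 8, s(v02 k, v02 (k+1)) ∈ Fs 0 ∨ s(v02 k, v02 (k+1)) ∈ Fs 2) ∧
    (∀ k : ZMod 8, s(w02 k, w02 (k+1)) ∈ Fs 0 ∨ s(w02 k, w02 (k+1)) ∈ Fs 2) ∧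
    (∀ e ∈ Fs 0, (∃ k : ZMod 8, e = s(v02 k, v02 (k+1))) ∨ ∃ k : ZMod 8, e = s(w02 k, w02 (k+1))) ∧
    (∀ e ∈ Fs 2, (∃ k : ZMod 8, e = s(v02 k, v02 (k+1))) ∨ ∃ k : ZMod 8, e = s(w02 k, w02 (k+1))) ∧
    (∀ k : ZMod 8, v02 (k+4) = v02 k + antip) ∧
    (∀ k : ZMod 8, w02 (k+4) = w02 k + antip) := by
  refine ⟨by decide, by decide, by decide, by decide, by decide, by decide, by decide⟩

set_option maxHeartbeats 1600000 in
theorem pair03 :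
    Function.Bijective (Sum.elim v03 w03 : ZMod 8 ⊕ ZMod 8 → Vx) ∧
    (∀ k : ZMod 8, s(v03 k, v03 (k+1)) ∈ Fs 0 ∨ s(v03 k, v03 (k+1)) ∈ Fs 3) ∧
    (∀ k : ZMod 8, s(w03 k, w03 (k+1)) ∈ Fs 0 ∨ s(w03 k, w03 (k+1)) ∈ Fs 3) ∧
    (∀ e ∈ Fs 0, (∃ k : ZMod 8, e = s(v03 k, v03 (k+1))) ∨ ∃ k : ZMod 8, e = s(w03 k, w03 (k+1))) ∧
    (∀ e ∈ Fs 3, (∃ k : ZMod 8, e = s(v03 k, v03 (k+1))) ∨ ∃ k : ZMod 8, e = s(w03 k, w03 (k+1))) ∧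
    (∀ k : ZMod 8, v03 (k+4) = v03 k + antip) ∧
    (∀ k : ZMod 8, w03 (k+4) = w03 k + antip) := by
  refine ⟨by decide, by decide, by decide, by decide, by decide, by decide, by decide⟩

set_option maxHeartbeats 1600000 in
theorem pair12 :
    Function.Bijective (Sum.elim v12 w12 : ZMod 8 ⊕ ZMod 8 → Vx) ∧
    (∀ k : ZMod 8, s(v12 k, v12 (k+1)) ∈ Fs 1 ∨ s(v12 k, v12 (k+1)) ∈ Fs 2) ∧
    (∀ k : ZMod 8, s(w12 k, w12 (k+1)) ∈ Fs 1 ∨ s(w12 k, w12 (k+1)) ∈ Fs 2) ∧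
    (∀ e ∈ Fs 1, (∃ k : ZMod 8, e = s(v12 k, v12 (k+1))) ∨ ∃ k : ZMod 8, e = s(w12 k, w12 (k+1))) ∧
    (∀ e ∈ Fs 2, (∃ k : ZMod 8, e = s(v12 k, v12 (k+1))) ∨ ∃ k : ZMod 8, e = s(w12 k, w12 (k+1))) ∧
    (∀ k : ZMod 8, v12 (k+4) = v12 k + antip) ∧
    (∀ k : ZMod 8, w12 (k+4) = w12 k + antip) := by
  refine ⟨by decide, by decide, by decide, by decide, by decide, by decide, by decide⟩

set_option maxHeartbeats 1600000 in
theorem pair13 :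
    Function.Bijective (Sum.elim v13 w13 : ZMod 8 ⊕ ZMod 8 → Vx) ∧
    (∀ k : ZMod 8, s(v13 k, v13 (k+1)) ∈ Fs 1 ∨ s(v13 k, v13 (k+1)) ∈ Fs 3) ∧
    (∀ k : ZMod 8, s(w13 k, w13 (k+1)) ∈ Fs 1 ∨ s(w13 k, w13 (k+1)) ∈ Fs 3) ∧
    (∀ e ∈ Fs 1, (∃ k : ZMod 8, e = s(v13 k, v13 (k+1))) ∨ ∃ k : ZMod 8, e = s(w13 k, w13 (k+1))) ∧
    (∀ e ∈ Fs 3, (∃ k : ZMod 8, e = s(v13 k, v13 (k+1))) ∨ ∃ k : ZMod 8, e = s(w13 k, w13 (k+1))) ∧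
    (∀ k : ZMod 8, v13 (k+4) = v13 k + antip) ∧
    (∀ k : ZMod 8, w13 (k+4) = w13 k + antip) := by
  refine ⟨by decide, by decide, by decide, by decide, by decide, by decide, by decide⟩

set_option maxHeartbeats 1600000 in
theorem pair23 :
    Function.Bijective (Sum.elim v23 w23 : ZMod 8 ⊕ ZMod 8 → Vx) ∧
    (∀ k : ZMod 8, s(v23 k, v23 (k+1)) ∈ Fs 2 ∨ s(v23 k, v23 (k+1)) ∈ Fs 3) ∧
    (∀ k : ZMod 8, s(w23 k, w23 (k+1)) ∈ Fs 2 ∨ s(w23 k, w23 (k+1)) ∈ Fs 3) ∧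
    (∀ e ∈ Fs 2, (∃ k : ZMod 8, e = s(v23 k, v23 (k+1))) ∨ ∃ k : ZMod 8, e = s(w23 k, w23 (k+1))) ∧
    (∀ e ∈ Fs 3, (∃ k : ZMod 8, e = s(v23 k, v23 (k+1))) ∨ ∃ k : ZMod 8, e = s(w23 k, w23 (k+1))) ∧
    (∀ k : ZMod 8, v23 (k+4) = v23 k + antip) ∧
    (∀ k : ZMod 8, w23 (k+4) = w23 k + antip) := by
  refine ⟨by decide, by decide, by decide, by decide, by decide, by decide, by decide⟩

def Pp (i j : Fin 4) : Prop :=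
  ∃ v w : ZMod 8 → (Fin 4 → ZMod 2),
    Function.Bijective (Sum.elim v w : ZMod 8 ⊕ ZMod 8 → (Fin 4 → ZMod 2)) ∧
    (∀ k : ZMod 8, s(v k, v (k + 1)) ∈ Ff i ∪ Ff j) ∧
    (∀ k : ZMod 8, s(w k, w (k + 1)) ∈ Ff i ∪ Ff j) ∧
    (Ff i ∪ Ff j =
      {e | ∃ k : ZMod 8, e = s(v k, v (k + 1))} ∪
      {e | ∃ k : ZMod 8, e = s(w k, w (k + 1))}) ∧
    (∀ k : ZMod 8, v (k + 4) = v k + antip) ∧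
    (∀ k : ZMod 8, w (k + 4) = w k + antip)

theorem mkP (i j : Fin 4) (v w : ZMod 8 → Vx)
    (h1 : Function.Bijective (Sum.elim v w : ZMod 8 ⊕ ZMod 8 → Vx))
    (h2 : ∀ k : ZMod 8, s(v k, v (k+1)) ∈ Fs i ∨ s(v k, v (k+1)) ∈ Fs j)
    (h3 : ∀ k : ZMod 8, s(w k, w (k+1)) ∈ Fs i ∨ s(w k, w (k+1)) ∈ Fs j)
    (h4a : ∀ e ∈ Fs i, (∃ k : ZMod 8, e = s(v k, v (k+1))) ∨ ∃ k : ZMod 8, e = s(w k, w (k+1)))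
    (h4b : ∀ e ∈ Fs j, (∃ k : ZMod 8, e = s(v k, v (k+1))) ∨ ∃ k : ZMod 8, e = s(w k, w (k+1)))
    (h5 : ∀ k : ZMod 8, v (k+4) = v k + antip)
    (h6 : ∀ k : ZMod 8, w (k+4) = w k + antip) : Pp i j := by
  refine ⟨v, w, h1, ?_, ?_, ?_, h5, h6⟩
  · intro k
    simp only [Ff, Set.mem_union, Finset.mem_coe]
    exact h2 k
  · intro k
    simp only [Ff, Set.mem_union, Finset.mem_coe]
    exact h3 k
  · apply Set.eq_of_subset_of_subset
    · intro e he
      simp only [Ff, Set.mem_union, Finset.mem_coe] at he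
      simp only [Set.mem_union, Set.mem_setOf_eq]
      rcases he with he | he
      · exact h4a e he
      · exact h4b e he
    · intro e he
      simp only [Set.mem_union, Set.mem_setOf_eq] at he
      simp only [Ff, Set.mem_union, Finset.mem_coe]
      rcases he with ⟨k, rfl⟩ | ⟨k, rfl⟩
      · exact h2 k
      · exact h3 k

theorem Psymm (i j : Fin 4) (h : Pp i j) : Pp j i := by
  unfold Pp at h ⊢
  simp only [Set.union_comm (Ff j) (Ff i)]
  exact h

theorem Pall : ∀ i j : Fin 4, i ≠ j → Pp i j := by
  have p01 : Pp 0 1 := mkP 0 1 v01 w01 pair01.1 pair01.2.1 pair01.2.2.1 pair01.2.2.2.1 pair01.2.2.2.2.1 pair01.2.2.2.2.2.1 pair01.2.2.2.2.2.2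
  have p02 : Pp 0 2 := mkP 0 2 v02 w02 pair02.1 pair02.2.1 pair02.2.2.1 pair02.2.2.2.1 pair02.2.2.2.2.1 pair02.2.2.2.2.2.1 pair02.2.2.2.2.2.2
  have p03 : Pp 0 3 := mkP 0 3 v03 w03 pair03.1 pair03.2.1 pair03.2.2.1 pair03.2.2.2.1 pair03.2.2.2.2.1 pair03.2.2.2.2.2.1 pair03.2.2.2.2.2.2
  have p12 : Pp 1 2 := mkP 1 2 v12 w12 pair12.1 pair12.2.1 pair12.2.2.1 pair12.2.2.2.1 pair12.2.2.2.2.1 pair12.2.2.2.2.2.1 pair12.2.2.2.2.2.2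
  have p13 : Pp 1 3 := mkP 1 3 v13 w13 pair13.1 pair13.2.1 pair13.2.2.1 pair13.2.2.2.1 pair13.2.2.2.2.1 pair13.2.2.2.2.2.1 pair13.2.2.2.2.2.2
  have p23 : Pp 2 3 := mkP 2 3 v23 w23 pair23.1 pair23.2.1 pair23.2.2.1 pair23.2.2.2.1 pair23.2.2.2.2.1 pair23.2.2.2.2.2.1 pair23.2.2.2.2.2.2
  intro i j hij
  fin_cases i <;> fin_cases j
  · exact absurd rfl hij
  · exact p01
  · exact p02
  · exact p03
  · exact Psymm _ _ p01
  · exact absurd rfl hij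
  · exact p12
  · exact p13
  · exact Psymm _ _ p02
  · exact Psymm _ _ p12
  · exact absurd rfl hij
  · exact p23
  · exact Psymm _ _ p03
  · exact Psymm _ _ p13
  · exact Psymm _ _ p23
  · exact absurd rfl hij

/-- there is a 1-factorization of `Q4`, rainbow on every 4-cycle,
such that the union of any two distinct 1-factors is a spanning 2-regular subgraph
consisting of two disjoint 8-cycles (`v` and `w`, indexed cyclically by `ZMod 8`,
together visiting the 16 vertices bijectively, their 16 edges being exactly
`F i ∪ F j`), and along each of the 8-cycles any two vertices at distance 4 apart
on the cycle are antipodal in `Q4`. -/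
theorem stmt3 : ∃ F : Fin 4 → Set (Sym2 (Fin 4 → ZMod 2)),
    IsOneFactorization Q4 F ∧
    (∀ a b c d : Fin 4 → ZMod 2, IsC4 Q4 a b c d →
      ∃ g : Fin 4 → Fin 4, Function.Bijective g ∧
        s(a, b) ∈ F (g 0) ∧ s(b, c) ∈ F (g 1) ∧ s(c, d) ∈ F (g 2) ∧ s(d, a) ∈ F (g 3)) ∧
    ∀ i j : Fin 4, i ≠ j →
      ∃ v w : ZMod 8 → (Fin 4 → ZMod 2),
        Function.Bijective (Sum.elim v w : ZMod 8 ⊕ ZMod 8 → (Fin 4 → ZMod 2)) ∧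
        (∀ k : ZMod 8, s(v k, v (k + 1)) ∈ F i ∪ F j) ∧
        (∀ k : ZMod 8, s(w k, w (k + 1)) ∈ F i ∪ F j) ∧
        (F i ∪ F j =
          {e | ∃ k : ZMod 8, e = s(v k, v (k + 1))} ∪
          {e | ∃ k : ZMod 8, e = s(w k, w (k + 1))}) ∧
        (∀ k : ZMod 8, v (k + 4) = v k + antip) ∧
        (∀ k : ZMod 8, w (k + 4) = w k + antip) := by
  classical
  refine ⟨Ff, ⟨?_, ?_⟩, ?_, fun i j h => Pall i j h⟩
  · -- perfect matchings
    intro i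
    constructor
    · intro e he
      exact Fs_sub i e (Finset.mem_coe.mp he)
    · intro vv
      refine ⟨s(vv, vv + uv (dirfun i vv)), ⟨?_, Sym2.mem_mk_left _ _⟩, ?_⟩
      · have h := mem_Fs vv (dirfun i vv)
        rw [col_dir] at h
        exact Finset.mem_coe.mpr h
      · rintro e ⟨he, hv⟩
        obtain ⟨p, hp, rfl⟩ := Finset.mem_image.mp (Fs_form i (Finset.mem_coe.mp he))
        have hcol : colfun p.1 p.2 = i := (Finset.mem_filter.mp hp).2
        rcases Sym2.mem_iff.mp hv with h | h
        · subst h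
          rw [← hcol, dir_col]
        · have h2 : colfun vv p.2 = i := by rw [h, col_consist, hcol]
          rw [← h2, dir_col, h, addu]
          exact Sym2.eq_swap
  · -- each edge in exactly one factor
    intro e
    induction e using Sym2.ind with
    | _ a b =>
      intro he
      rw [SimpleGraph.mem_edgeSet] at he
      obtain ⟨k, rfl⟩ := (adj_iff a b).mp he
      exact ⟨colfun a k, Finset.mem_coe.mpr (mem_Fs a k),
        fun j hj => Fs_unique a k j (Finset.mem_coe.mp hj)⟩
  · -- rainbow C4s
    intro a b c d h
    obtain ⟨k, l, hkl, rfl, rfl, rfl⟩ := c4_form a b c d h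
    obtain ⟨hbij, m1, m2, m3, m4⟩ := rainbow_aux a k l hkl
    exact ⟨![colfun a k, colfun (a + uv k) l, colfun (a + uv l) k, colfun a l], hbij,
      Finset.mem_coe.mpr m1, Finset.mem_coe.mpr m2, Finset.mem_coe.mpr m3, Finset.mem_coe.mpr m4⟩
end

section
/- The automorphism group of the 4-cube graph Q₄ has exactly 384 elements, and it is isomorphic to the semidirect product of Z₂⁴ (the translations x ↦ x + a on the vertex set) by the symmetric group Sym₄ acting by permuting the four coordinates. -/
/-- The automorphism group of `Q4`, as the subgroup of permutations of the vertex set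
preserving adjacency. -/
def autQ4 : Subgroup (Equiv.Perm (Fin 4 → ZMod 2)) where
  carrier := {σ | ∀ x y, Q4.Adj (σ x) (σ y) ↔ Q4.Adj x y}
  one_mem' := by intro x y; simp
  mul_mem' := by
    intro a b ha hb x y
    simpa using (ha (b x) (b y)).trans (hb x y)
  inv_mem' := by
    intro a ha x y
    simpa using (ha (a⁻¹ x) (a⁻¹ y)).symm

/-- The action of `Sym₄` on `Z₂⁴ = Fin 4 → ZMod 2` (written multiplicatively)
by permuting the four coordinates. -/
def coordHom : Equiv.Perm (Fin 4) →* MulAut (Multiplicative (Fin 4 → ZMod 2)) where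
  toFun σ :=
    { toFun := fun x => Multiplicative.ofAdd fun i => Multiplicative.toAdd x (σ⁻¹ i)
      invFun := fun x => Multiplicative.ofAdd fun i => Multiplicative.toAdd x (σ i)
      left_inv := by intro x; funext i; simp
      right_inv := by intro x; funext i; simp
      map_mul' := by intro x y; rfl }
  map_one' := by
    apply MulEquiv.ext; intro x; rfl
  map_mul' := by
    intro σ τ
    apply MulEquiv.ext; intro x
    funext i
    simp [mul_inv_rev]

abbrev V4 : Type := Fin 4 → ZMod 2

def wt (z : V4) : ℕ := (Finset.univ.filter fun i => z i ≠ 0).card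

def adj0 (z : V4) : Prop := wt z = 1

instance : DecidablePred adj0 := fun z => by unfold adj0 wt; infer_instance

lemma addself (v : V4) : v + v = 0 := by
  funext i
  have : ∀ a : ZMod 2, a + a = 0 := by decide
  exact this (v i)

lemma adjQ (x y : V4) : Q4.Adj x y ↔ adj0 (x + y) := by
  show (Finset.univ.filter fun i => x i ≠ y i).card = 1 ↔ _
  unfold adj0 wt
  have h : (Finset.univ.filter fun i => x i ≠ y i)
      = (Finset.univ.filter fun i => (x + y) i ≠ 0) := by
    apply Finset.filter_congr
    intro i _
    have : ∀ a b : ZMod 2, (a ≠ b) ↔ (a + b ≠ 0) := by decide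
    simpa using this (x i) (y i)
  rw [h]

def ee (i : Fin 4) : V4 := fun j => if j = i then 1 else 0

lemma dwt0 : ∀ x : V4, wt x = 0 → x = 0 := by decide
lemma dwt1 : ∀ x : V4, adj0 x → ∃ i, x = ee i := by decide
lemma dsplit : ∀ x : V4, 2 ≤ wt x → ∃ i j, i ≠ j ∧ x i ≠ 0 ∧ x j ≠ 0 := by decide
lemma dwtsub : ∀ (x : V4) (i : Fin 4), x i ≠ 0 → wt (x + ee i) + 1 = wt x := by decide
lemma dadj0ee : ∀ i, adj0 (ee i) := by decide
lemma dee_ne : ∀ i j : Fin 4, i ≠ j → ee i + ee j ≠ 0 := by decide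
lemma dee_inj : ∀ i j : Fin 4, ee i = ee j → i = j := by decide
lemma dA : ∀ v w w' : V4, v ≠ 0 → adj0 w → adj0 (w + v) → adj0 w' → adj0 (w' + v) →
    w ≠ w' → w + w' = v := by decide
lemma dperm : ∀ (σ : Equiv.Perm (Fin 4)) (z : V4),
    adj0 (fun i => z (σ.symm i)) ↔ adj0 z := by decide

lemma tr_mem (a : V4) : Equiv.addLeft a ∈ autQ4 := by
  intro x y
  show Q4.Adj (a + x) (a + y) ↔ Q4.Adj x y
  rw [adjQ, adjQ]
  have : (a + x) + (a + y) = x + y := by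
    have h : (a + x) + (a + y) = (a + a) + (x + y) := by abel
    rw [h, addself, zero_add]
  rw [this]

def permPerm (σ : Equiv.Perm (Fin 4)) : Equiv.Perm V4 :=
  Equiv.arrowCongr σ (Equiv.refl (ZMod 2))

lemma permPerm_apply (σ : Equiv.Perm (Fin 4)) (x : V4) :
    permPerm σ x = fun i => x (σ.symm i) := rfl

lemma perm_mem (σ : Equiv.Perm (Fin 4)) : permPerm σ ∈ autQ4 := by
  intro x y
  rw [adjQ, adjQ]
  have h : permPerm σ x + permPerm σ y = fun i => (x + y) (σ.symm i) := rfl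
  rw [h]
  exact dperm σ (x + y)

def T : Multiplicative V4 →* autQ4 where
  toFun a := ⟨Equiv.addLeft a.toAdd, tr_mem _⟩
  map_one' := by
    apply Subtype.ext; apply Equiv.ext; intro x
    show (0 : V4) + x = x
    simp
  map_mul' a b := by
    apply Subtype.ext; apply Equiv.ext; intro x
    show (a.toAdd + b.toAdd) + x = a.toAdd + (b.toAdd + x)
    rw [add_assoc]

def P : Equiv.Perm (Fin 4) →* autQ4 where
  toFun σ := ⟨permPerm σ, perm_mem σ⟩
  map_one' := by
    apply Subtype.ext; apply Equiv.ext; intro x; rfl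
  map_mul' σ τ := by
    apply Subtype.ext; apply Equiv.ext; intro x; rfl

lemma T_apply (a : Multiplicative V4) (x : V4) :
    ((T a : autQ4) : Equiv.Perm V4) x = a.toAdd + x := rfl

lemma P_apply (σ : Equiv.Perm (Fin 4)) (x : V4) :
    ((P σ : autQ4) : Equiv.Perm V4) x = fun i => x (σ.symm i) := rfl

lemma P_inv_apply (σ : Equiv.Perm (Fin 4)) (x : V4) :
    (((P σ : autQ4) : Equiv.Perm V4))⁻¹ x = fun i => x (σ i) := rfl

lemma coordHom_toAdd (σ : Equiv.Perm (Fin 4)) (a : Multiplicative V4) :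
    ((coordHom σ) a).toAdd = fun i => a.toAdd (σ⁻¹ i) := rfl

lemma hcomp : ∀ g : Equiv.Perm (Fin 4),
    T.comp (coordHom g).toMonoidHom = (MulAut.conj (P g)).toMonoidHom.comp T := by
  intro σ
  apply MonoidHom.ext; intro a
  apply Subtype.ext; apply Equiv.ext; intro x
  funext i
  simp only [MulAut.conj, MonoidHom.coe_comp, Function.comp_apply, MulEquiv.coe_toMonoidHom,
    MulEquiv.coe_mk, Equiv.coe_fn_mk, MonoidHom.coe_mk, OneHom.coe_mk, Subgroup.coe_mul,
    InvMemClass.coe_inv, Equiv.Perm.mul_apply]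
  rw [T_apply, coordHom_toAdd, P_inv_apply, T_apply, P_apply]
  simp [Pi.add_apply, Equiv.apply_symm_apply, Equiv.Perm.inv_def]

def Φ := SemidirectProduct.lift T P hcomp

lemma Φ_apply (a : Multiplicative V4) (σ : Equiv.Perm (Fin 4)) (x : V4) :
    ((Φ ⟨a, σ⟩ : autQ4) : Equiv.Perm V4) x = a.toAdd + fun i => x (σ.symm i) := rfl

lemma Φ_inj : Function.Injective Φ := by
  rw [injective_iff_map_eq_one]
  rintro ⟨a, σ⟩ h
  have hv : ∀ x : V4, (a.toAdd + fun i => x (σ.symm i)) = x :=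
    fun x => congrArg (fun p : autQ4 => (p : Equiv.Perm V4) x) h
  have ha : a.toAdd = 0 := by
    have h0 := hv 0
    calc a.toAdd = a.toAdd + fun i => (0 : V4) (σ.symm i) := by funext k; simp
    _ = 0 := h0
  have hσ : σ = 1 := by
    apply Equiv.ext; intro j
    show σ j = j
    by_contra hne
    have hj := congrFun (hv (ee j)) (σ j)
    simp only [ha, Pi.add_apply, Pi.zero_apply, zero_add, Equiv.symm_apply_apply] at hj
    rw [show ee j j = 1 from by simp [ee]] at hj
    simp only [ee] at hj
    rw [if_neg hne] at hj
    exact one_ne_zero hj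
  have ha' : a = 1 := by
    have : a.toAdd = (1 : Multiplicative V4).toAdd := ha
    exact Multiplicative.toAdd.injective this
  rw [ha', hσ]; rfl

lemma vv1 (x e f : V4) : (x + e) + (x + f) = e + f := by
  funext k
  have h : ∀ a b c : ZMod 2, (a + b) + (a + c) = b + c := by decide
  exact h (x k) (e k) (f k)

lemma vv2 (x e f : V4) : (x + e) + (x + e + f) = f := by
  funext k
  have h : ∀ a b c : ZMod 2, (a + b) + (a + b + c) = c := by decide
  exact h (x k) (e k) (f k)

lemma vv3 (x e f : V4) : (x + e + f) + (x + f) = e := by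
  funext k
  have h : ∀ a b c : ZMod 2, (a + b + c) + (a + c) = b := by decide
  exact h (x k) (e k) (f k)

lemma vv4 (x e f : V4) : x + (x + e + f) = e + f := by
  funext k
  have h : ∀ a b c : ZMod 2, a + (a + b + c) = b + c := by decide
  exact h (x k) (e k) (f k)

lemma vv5 (p q : V4) : (p + q) + q = p := by
  funext k
  have h : ∀ a b : ZMod 2, (a + b) + b = a := by decide
  exact h (p k) (q k)

lemma vv6 (x e f : V4) : (e + f) + (x + e + f) = x := by
  funext k
  have h : ∀ a b c : ZMod 2, (b + c) + (a + b + c) = a := by decide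
  exact h (x k) (e k) (f k)

lemma Φ_surj : Function.Surjective Φ := by
  rintro ⟨f, hf⟩
  set a : V4 := f 0 with hadef
  set g : Equiv.Perm V4 := (Equiv.addLeft a)⁻¹ * f with hgdef
  have hg : g ∈ autQ4 := mul_mem (inv_mem (tr_mem a)) hf
  have hg0 : g 0 = 0 := by
    show (Equiv.addLeft a)⁻¹ (f 0) = 0
    rw [← hadef]
    show (Equiv.addLeft a).symm a = 0
    rw [Equiv.symm_apply_eq]
    show a = a + 0
    rw [add_zero]
  have hadj : ∀ i, adj0 (g (ee i)) := by
    intro i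
    have h1 : Q4.Adj 0 (ee i) := by
      rw [adjQ, zero_add]; exact dadj0ee i
    have h2 : Q4.Adj (g 0) (g (ee i)) := (hg 0 (ee i)).2 h1
    rw [hg0, adjQ, zero_add] at h2
    exact h2
  choose t ht using fun i => dwt1 _ (hadj i)
  have htinj : Function.Injective t := by
    intro i j hij
    have : g (ee i) = g (ee j) := by rw [ht i, ht j, hij]
    exact dee_inj i j (g.injective this)
  let σ : Equiv.Perm (Fin 4) := Equiv.ofBijective t (Finite.injective_iff_bijective.1 htinj)
  have hσt : ∀ i, σ i = t i := fun i => rfl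
  set hp : Equiv.Perm V4 := (permPerm σ)⁻¹ * g with hpdef
  have hhp : hp ∈ autQ4 := mul_mem (inv_mem (perm_mem σ)) hg
  have hp0 : hp 0 = 0 := by
    show (permPerm σ)⁻¹ (g 0) = 0
    rw [hg0]
    rfl
  have hpee : ∀ i, hp (ee i) = ee i := by
    intro i
    show (permPerm σ)⁻¹ (g (ee i)) = ee i
    rw [ht i, ← hσt i]
    show (permPerm σ).symm (ee (σ i)) = ee i
    rw [Equiv.symm_apply_eq, permPerm_apply]
    funext j
    show ee (σ i) j = ee i (σ.symm j)
    unfold ee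
    by_cases hji : σ.symm j = i
    · rw [if_pos hji, if_pos (by rw [← hji, Equiv.apply_symm_apply])]
    · rw [if_neg hji, if_neg (fun hc => hji (by rw [hc, Equiv.symm_apply_apply]))]
  have key : ∀ n (x : V4), wt x = n → hp x = x := by
    intro n
    induction n using Nat.strong_induction_on with
    | _ n IH =>
      intro x hx
      match n, hx with
      | 0, hx => rw [dwt0 x hx]; exact hp0
      | 1, hx =>
        obtain ⟨i, rfl⟩ := dwt1 x hx
        exact hpee i
      | (m+2), hx =>
        obtain ⟨i, j, hij, hxi, hxj⟩ := dsplit x (by omega)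
        set u : V4 := x + ee i with hu
        set v : V4 := x + ee j with hv
        set y : V4 := x + ee i + ee j with hy
        have hwu : wt u + 1 = m + 2 := hx ▸ dwtsub x i hxi
        have hwv : wt v + 1 = m + 2 := hx ▸ dwtsub x j hxj
        have hvi : v i ≠ 0 := by
          have h0 : ee j i = 0 := by simp only [ee]; rw [if_neg hij]
          show x i + ee j i ≠ 0
          rw [h0, add_zero]; exact hxi
        have hyv : y = v + ee i := by rw [hy, hv]; abel
        have hwy : wt y + 1 + 1 = m + 2 := by
          rw [hyv, dwtsub v i hvi]; exact hwv
        have hhu : hp u = u := IH (wt u) (by omega) u rfl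
        have hhv : hp v = v := IH (wt v) (by omega) v rfl
        have hhy : hp y = y := IH (wt y) (by omega) y rfl
        have hux : Q4.Adj u x := by
          rw [adjQ]
          have h0 : u + x = ee i := by rw [hu, add_comm x (ee i), vv5]
          rw [h0]; exact dadj0ee i
        have hvx : Q4.Adj v x := by
          rw [adjQ]
          have h0 : v + x = ee j := by rw [hv, add_comm x (ee j), vv5]
          rw [h0]; exact dadj0ee j
        have hux' : adj0 (u + hp x) := by
          have h2 := (hhp u x).2 hux
          rw [hhu, adjQ] at h2; exact h2
        have hvx' : adj0 (v + hp x) := by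
          have h2 := (hhp v x).2 hvx
          rw [hhv, adjQ] at h2; exact h2
        have huv : u + v = ee i + ee j := by rw [hu, hv, vv1]
        have hne0 : ee i + ee j ≠ (0 : V4) := dee_ne i j hij
        have hw'1 : adj0 (u + y) := by
          have h0 : u + y = ee j := by rw [hu, hy, vv2]
          rw [h0]; exact dadj0ee j
        have hwa : (u + hp x) + (ee i + ee j) = v + hp x := by
          rw [← huv, vv1, add_comm]
        have hw'a : (u + y) + (ee i + ee j) = ee i := by
          rw [← huv, vv1, hy, hv, vv3]
        have hxy : x ≠ y := by
          intro hxe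
          have h0 : x + y = ee i + ee j := by rw [hy, vv4]
          exact hne0 (by rw [← h0, hxe, addself])
        have hwne : u + hp x ≠ u + y := by
          intro heq
          have h1 : hp x = y := add_left_cancel heq
          exact hxy (hp.injective (h1.trans hhy.symm))
        have hsum := dA (ee i + ee j) (u + hp x) (u + y) hne0 hux'
          (by rw [hwa]; exact hvx') hw'1 (by rw [hw'a]; exact dadj0ee i) hwne
        have h1 : hp x + y = ee i + ee j := by rw [← vv1 u (hp x) y]; exact hsum
        have h2 : (hp x + y) + y = (ee i + ee j) + y := by rw [h1]
        rw [vv5] at h2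
        rw [h2, hy, vv6]
  -- conclude: f is in the range of Φ
  refine ⟨⟨Multiplicative.ofAdd a, σ⟩, ?_⟩
  apply Subtype.ext; apply Equiv.ext; intro x
  rw [Φ_apply]
  have hgx : g x = fun i => x (σ.symm i) := by
    have h1 : (permPerm σ).symm (g x) = x := key (wt x) x rfl
    rw [Equiv.symm_apply_eq] at h1
    rw [h1, permPerm_apply]
  rw [← hgx]
  show Equiv.addLeft a ((Equiv.addLeft a).symm (f x)) = f x
  rw [Equiv.apply_symm_apply]

noncomputable def Φequiv :
    SemidirectProduct (Multiplicative (Fin 4 → ZMod 2)) (Equiv.Perm (Fin 4)) coordHom ≃* autQ4 :=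
  MulEquiv.ofBijective Φ ⟨Φ_inj, Φ_surj⟩

/-- the automorphism group of `Q4` has exactly 384 elements and is
isomorphic to the semidirect product of `Z₂⁴` (the translations) by `Sym₄`
(permuting the four coordinates). -/
theorem stmt8 :
    Nat.card autQ4 = 384 ∧
    Nonempty (autQ4 ≃* SemidirectProduct (Multiplicative (Fin 4 → ZMod 2))
      (Equiv.Perm (Fin 4)) coordHom) := by
  constructor
  · have e : SemidirectProduct (Multiplicative (Fin 4 → ZMod 2)) (Equiv.Perm (Fin 4)) coordHom ≃
        (Multiplicative (Fin 4 → ZMod 2)) × Equiv.Perm (Fin 4) :=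
      ⟨fun p => (p.left, p.right), fun p => ⟨p.1, p.2⟩, fun p => rfl, fun p => rfl⟩
    rw [← Nat.card_congr Φequiv.toEquiv, Nat.card_congr e, Nat.card_prod]
    simp [Nat.card_eq_fintype_card, Fintype.card_perm]
    norm_num [Nat.factorial]
  · exact ⟨Φequiv.symm⟩
end

section
/- For every 1-factorization of the complete bipartite graph K₄,₄ into four perfect matchings, there exists a 4-cycle of K₄,₄ whose four edges lie in only two of the four perfect matchings; in particular, no 1-factorization of K₄,₄ is rainbow on all 4-cycles (unlike the rainbow 1-factorization of Q₄, whose quotient 1-factorization of K₄,₄ therefore fails to be 4-cycle-rainbow). -/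
variable {V : Type*}

/-- The complete bipartite graph `K₄,₄` with parts `Fin 4` and `Fin 4`. -/
abbrev K44 : SimpleGraph (Fin 4 ⊕ Fin 4) := completeBipartiteGraph (Fin 4) (Fin 4)

/-- An even derangement of a 4-element set has a 2-cycle. -/
lemma even_derangement_has_two_cycle :
    ∀ τ : Equiv.Perm (Fin 4), Equiv.Perm.sign τ = 1 → (∀ x, τ x ≠ x) →
      ∃ x, τ x ≠ x ∧ τ (τ x) = x := by decide

/-- every 1-factorization of `K₄,₄` has a 4-cycle whose four edges lie
in only two of the four 1-factors (opposite edges in the same 1-factor); in particular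
no 1-factorization of `K₄,₄` is rainbow on all 4-cycles. -/
theorem stmt10 : ∀ F : Fin 4 → Set (Sym2 (Fin 4 ⊕ Fin 4)),
    IsOneFactorization K44 F →
    ∃ a b c d : Fin 4 ⊕ Fin 4, IsC4 K44 a b c d ∧
      ∃ i j : Fin 4, i ≠ j ∧
        s(a, b) ∈ F i ∧ s(c, d) ∈ F i ∧ s(b, c) ∈ F j ∧ s(d, a) ∈ F j := by
  intro F hF
  obtain ⟨hPM, huniq⟩ := hF
  -- partner function: for each factor i and left vertex a, the right partner
  have key : ∀ (i : Fin 4) (a : Fin 4), ∃ b : Fin 4, s(Sum.inl a, Sum.inr b) ∈ F i := by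
    intro i a
    obtain ⟨e, ⟨heF, hev⟩, -⟩ := (hPM i).2 (Sum.inl a)
    obtain ⟨w, rfl⟩ := Sym2.mem_iff_exists.1 hev
    have hadj : K44.Adj (Sum.inl a) w := (SimpleGraph.mem_edgeSet _).1 ((hPM i).1 heF)
    cases w with
    | inl w => simp [completeBipartiteGraph] at hadj
    | inr w => exact ⟨w, heF⟩
  choose m hm using key
  -- injectivity of each m i
  have hinj : ∀ i, Function.Injective (m i) := by
    intro i a a' h
    obtain ⟨e, -, hu⟩ := (hPM i).2 (Sum.inr (m i a))
    have h1 := hu _ ⟨hm i a, by simp⟩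
    have h2 := hu s(Sum.inl a', Sum.inr (m i a)) ⟨by rw [h]; exact hm i a', by simp⟩
    rw [← h2] at h1
    simpa [Sym2.eq_iff] using h1
  -- distinct factors have distinct partners
  have hne : ∀ i j a, i ≠ j → m i a ≠ m j a := by
    intro i j a hij hmj
    have hedge : s(Sum.inl a, Sum.inr (m i a)) ∈ K44.edgeSet := (hPM i).1 (hm i a)
    obtain ⟨k, -, hk⟩ := huniq _ hedge
    have := (hk i (hm i a)).trans (hk j (by rw [hmj]; exact hm j a)).symm
    exact hij this
  -- the permutations
  have hbij : ∀ i, Function.Bijective (m i) := fun i =>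
    (Finite.injective_iff_bijective).1 (hinj i)
  let σ : Fin 4 → Equiv.Perm (Fin 4) := fun i => Equiv.ofBijective (m i) (hbij i)
  have hσ : ∀ i a, σ i a = m i a := fun i a => rfl
  -- pigeonhole on sign
  obtain ⟨i, j, hij, hsign⟩ :
      ∃ i j : Fin 4, i ≠ j ∧ Equiv.Perm.sign (σ i) = Equiv.Perm.sign (σ j) := by
    obtain ⟨i, j, hij, h⟩ := Fintype.exists_ne_map_eq_of_card_lt
      (fun i : Fin 4 => Equiv.Perm.sign (σ i)) (by simp)
    exact ⟨i, j, hij, h⟩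
  set τ : Equiv.Perm (Fin 4) := σ i * (σ j)⁻¹ with hτ
  have hτsign : Equiv.Perm.sign τ = 1 := by
    rw [hτ, map_mul, map_inv, hsign]
    simp
  have hτder : ∀ x, τ x ≠ x := by
    intro x hx
    have ha : σ i ((σ j)⁻¹ x) = x := hx
    have : m i ((σ j)⁻¹ x) = m j ((σ j)⁻¹ x) := by
      rw [← hσ, ← hσ, ha]
      exact (Equiv.apply_symm_apply (σ j) x).symm
    exact hne i j _ hij this
  obtain ⟨x, hxne, hxx⟩ := even_derangement_has_two_cycle τ hτsign hτder
  -- set up the 4-cycle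
  set a : Fin 4 := (σ j)⁻¹ x with hadef
  set a' : Fin 4 := (σ j)⁻¹ (τ x) with ha'def
  have hja : m j a = x := by rw [← hσ]; exact Equiv.apply_symm_apply (σ j) x
  have hja' : m j a' = τ x := by rw [← hσ]; exact Equiv.apply_symm_apply (σ j) (τ x)
  have hia : m i a = τ x := by
    rw [← hσ]
    show σ i ((σ j)⁻¹ x) = τ x
    rfl
  have hia' : m i a' = x := by
    rw [← hσ]
    show σ i ((σ j)⁻¹ (τ x)) = x
    exact hxx
  have haa' : a ≠ a' := by
    intro h
    rw [hadef, ha'def] at h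
    exact hxne (((σ j)⁻¹).injective h).symm
  refine ⟨Sum.inl a, Sum.inr (τ x), Sum.inl a', Sum.inr x, ?_, i, j, hij, ?_, ?_, ?_, ?_⟩
  · refine ⟨by simp, by simp [haa'], by simp, by simp, ?_, by simp, ?_, ?_, ?_, ?_⟩
    · simp [Sum.inr.injEq]; exact fun h => hxne h
    · simp [completeBipartiteGraph]
    · simp [completeBipartiteGraph]
    · simp [completeBipartiteGraph]
    · simp [completeBipartiteGraph]
  · rw [← hia]; exact hm i a
  · rw [← hia']; exact hm i a'
  · rw [Sym2.eq_swap, ← hja']; exact hm j a'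
  · rw [Sym2.eq_swap, ← hja]; exact hm j a
end

section
/- Every perfect matching of the 4-cube graph Q₄ that is invariant under the antipodal map x ↦ x + (1,1,1,1) (i.e., the antipodal map sends the matching's edge set onto itself) projects, under the antipodal quotient map from Q₄ onto K₄,₄, to a perfect matching of K₄,₄. -/
variable {V : Type*}

/-- every perfect matching of `Q4` that is invariant under the antipodal
map `x ↦ x + (1,1,1,1)` projects, under the antipodal quotient map from `Q4` onto
`K₄,₄` (any map `φ` identifying exactly the antipodal pairs and inducing the adjacency
of `K₄,₄` from that of `Q4`), to a perfect matching of `K₄,₄`. -/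
theorem stmt11 (φ : (Fin 4 → ZMod 2) → (Fin 4 ⊕ Fin 4))
    (hsurj : Function.Surjective φ)
    (hconst : ∀ x, φ (x + antip) = φ x)
    (hfib : ∀ x y, φ x = φ y → y = x ∨ y = x + antip)
    (hadj : ∀ u v : Fin 4 ⊕ Fin 4, K44.Adj u v ↔ ∃ x y, φ x = u ∧ φ y = v ∧ Q4.Adj x y)
    (M : Set (Sym2 (Fin 4 → ZMod 2)))
    (hM : IsPM Q4 M)
    (hMinv : Sym2.map (fun x => x + antip) '' M = M) :
    IsPM K44 (Sym2.map φ '' M) := by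
  obtain ⟨hsub, huniq⟩ := hM
  constructor
  · rintro e ⟨f, hf, rfl⟩
    induction f using Sym2.ind with
    | _ x y =>
      have hxy : Q4.Adj x y := hsub hf
      rw [Sym2.map_pair_eq, SimpleGraph.mem_edgeSet]
      exact (hadj _ _).2 ⟨x, y, rfl, rfl, hxy⟩
  · intro u
    obtain ⟨x, rfl⟩ := hsurj u
    obtain ⟨e, ⟨heM, hxe⟩, hu⟩ := huniq x
    refine ⟨Sym2.map φ e, ⟨⟨e, heM, rfl⟩, Sym2.mem_map.2 ⟨x, hxe, rfl⟩⟩, ?_⟩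
    rintro e' ⟨⟨f, hfM, rfl⟩, hmem⟩
    obtain ⟨y, hyf, hy⟩ := Sym2.mem_map.1 hmem
    have hmapconst : ∀ z, Sym2.map φ (Sym2.map (fun x => x + antip) z) = Sym2.map φ z := by
      intro z
      rw [Sym2.map_map]
      exact congrFun (congrArg Sym2.map (funext hconst)) z
    rcases hfib x y hy.symm with rfl | rfl
    · exact congrArg _ (hu f ⟨hfM, hyf⟩)
    · set g := Sym2.map (fun z => z + antip) f with hg
      have hgM : g ∈ M := by
        rw [← hMinv]; exact ⟨f, hfM, rfl⟩
      have hxg : x ∈ g := by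
        have : x + antip + antip = x := by
          funext i
          show x i + 1 + 1 = x i
          have h2 : (1 : ZMod 2) + 1 = 0 := rfl
          rw [add_assoc, h2, add_zero]
        refine Sym2.mem_map.2 ⟨x + antip, hyf, ?_⟩
        exact this
      have := hu g ⟨hgM, hxg⟩
      calc Sym2.map φ f = Sym2.map φ g := (hmapconst f).symm
        _ = Sym2.map φ e := congrArg _ this
end
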